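/- Let H be a reproducing kernel Hilbert space on X and A a unital algebra of multipliers on H. Fix points x_1,...,x_n ∈ X, nonzero vectors v_1,...,v_n in a Hilbert space E, and let J = { G ∈ C(A) : ⟨G(x_i), v_i⟩ = 0 for all i }, a subspace of the column space C(A) over E. If h ∈ H satisfies h(x_i) ≠ 0 for all i, and A separates the points x_1,...,x_n, then with L = closure(A·h), the space closure(C(A)·h) ⊖ closure(J·h) equals span{ P_L k_{x_i} ⊗ v_i : i = 1..n }. -/

import Mathlib

open scoped ComplexConjugate ENNReal

noncomputable section StmtAux

variable {ι : Type*} {H : Type*} [NormedAddCommGroup H] [InnerProductSpace ℂ H]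

local notation "⟪" a ", " b "⟫" => @inner ℂ _ _ a b

lemma stmt11_memℓp_tens (c : lp (fun _ : ι => ℂ) 2) (u : H) :
    Memℓp (fun j => c j • u) 2 := by
  apply memℓp_gen
  have hc : Summable fun j => ‖c j‖ ^ (2 : ℝ≥0∞).toReal :=
    (memℓp_gen_iff (by norm_num)).1 (lp.memℓp c)
  have := hc.mul_right (‖u‖ ^ (2 : ℝ≥0∞).toReal)
  refine this.congr fun j => ?_
  rw [norm_smul, Real.mul_rpow (norm_nonneg _) (norm_nonneg _)]

/-- elementary tensor `u ⊗ c` as an element of `lp (fun _ : ι => H) 2`. -/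
def stmt11Tens (c : lp (fun _ : ι => ℂ) 2) (u : H) : lp (fun _ : ι => H) 2 :=
  ⟨fun j => c j • u, stmt11_memℓp_tens c u⟩

@[simp] lemma stmt11Tens_apply (c : lp (fun _ : ι => ℂ) 2) (u : H) (j : ι) :
    stmt11Tens c u j = c j • u := rfl

lemma stmt11Tens_add (c : lp (fun _ : ι => ℂ) 2) (u w : H) :
    stmt11Tens c (u + w) = stmt11Tens c u + stmt11Tens c w := by
  apply lp.ext
  funext j
  simp only [lp.coeFn_add, Pi.add_apply, stmt11Tens_apply, smul_add]

lemma stmt11Tens_sub (c : lp (fun _ : ι => ℂ) 2) (u w : H) :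
    stmt11Tens c (u - w) = stmt11Tens c u - stmt11Tens c w := by
  apply lp.ext
  funext j
  simp only [lp.coeFn_sub, Pi.sub_apply, stmt11Tens_apply, smul_sub]

lemma stmt11Tens_smul (c : lp (fun _ : ι => ℂ) 2) (a : ℂ) (u : H) :
    stmt11Tens c (a • u) = a • stmt11Tens c u := by
  apply lp.ext
  funext j
  simp only [lp.coeFn_smul, Pi.smul_apply, stmt11Tens_apply]
  rw [smul_comm]

lemma stmt11Tens_norm (c : lp (fun _ : ι => ℂ) 2) (u : H) :
    ‖stmt11Tens c u‖ = ‖c‖ * ‖u‖ := by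
  have h2 : (0:ℝ) < (2 : ℝ≥0∞).toReal := by norm_num
  have key : ‖stmt11Tens c u‖ ^ (2 : ℝ≥0∞).toReal = (‖c‖ * ‖u‖) ^ (2 : ℝ≥0∞).toReal := by
    rw [lp.norm_rpow_eq_tsum h2, Real.mul_rpow (norm_nonneg _) (norm_nonneg _),
      lp.norm_rpow_eq_tsum h2 c, ← tsum_mul_right]
    congr 1
    funext j
    rw [stmt11Tens_apply, norm_smul, Real.mul_rpow (norm_nonneg _) (norm_nonneg _)]
  have h2' : (2 : ℝ≥0∞).toReal = ((2 : ℕ) : ℝ) := by norm_num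
  rw [h2', Real.rpow_natCast, Real.rpow_natCast] at key
  exact (sq_eq_sq₀ (norm_nonneg _) (by positivity)).1 key

/-- `u ↦ u ⊗ c` as a continuous linear map. -/
def stmt11TensCLM (c : lp (fun _ : ι => ℂ) 2) : H →L[ℂ] lp (fun _ : ι => H) 2 :=
  LinearMap.mkContinuous
    { toFun := fun u => stmt11Tens c u
      map_add' := fun u w => stmt11Tens_add c u w
      map_smul' := fun a u => stmt11Tens_smul c a u } ‖c‖
    (fun u => le_of_eq (stmt11Tens_norm c u))

@[simp] lemma stmt11TensCLM_apply (c : lp (fun _ : ι => ℂ) 2) (u : H) :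
    stmt11TensCLM c u = stmt11Tens c u := rfl

lemma stmt11_inner_tens_left (c : lp (fun _ : ι => ℂ) 2) (u : H) (ξ : lp (fun _ : ι => H) 2) :
    ⟪stmt11Tens c u, ξ⟫ = ∑' j, conj (c j) * ⟪u, ξ j⟫ := by
  rw [lp.inner_eq_tsum]
  congr 1
  funext j
  rw [stmt11Tens_apply, inner_smul_left]

lemma stmt11_inner_tens_tens (c c' : lp (fun _ : ι => ℂ) 2) (u u' : H) :
    ⟪stmt11Tens c u, stmt11Tens c' u'⟫ = ⟪c, c'⟫ * ⟪u, u'⟫ := by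
  rw [stmt11_inner_tens_left, lp.inner_eq_tsum, ← tsum_mul_right]
  congr 1
  funext j
  rw [stmt11Tens_apply, inner_smul_right, RCLike.inner_apply]
  ring

end StmtAux

set_option maxHeartbeats 2000000 in
/-- Let `A` be a unital algebra of multipliers on a reproducing kernel
Hilbert space `H` (realized via `E`, kernel vectors `k x`, multiplication operators
`Mop f`), and let `C(A)` be the space of column operators `T : H → H ⊗ ℓ²(ι)` over `A`.
Fix points `x 1, …, x n`, nonzero vectors `v 1, …, v n ∈ ℓ²(ι)`, and let
`J = {G ∈ C(A) : ⟨G(x_i), v_i⟩ = 0 ∀ i}`.  If `h ∈ H` satisfies `h(x_i) ≠ 0` for all `i`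
and `A` separates the points `x i`, then, with `L = closure(A·h)` and `P_L k_{x_i}` the
reproducing kernels of `L` (characterized by `kL i ∈ L` and `k (x i) - kL i ∈ Lᗮ`),
`closure(C(A)·h) ⊖ closure(J·h) = span{P_L k_{x_i} ⊗ v_i : i = 1..n}`. -/
theorem stmt_11 {X : Type*} {H : Type*} [NormedAddCommGroup H] [InnerProductSpace ℂ H]
    [CompleteSpace H] (E : H →ₗ[ℂ] (X → ℂ)) (hE : Function.Injective E)
    (k : X → H) (hk : ∀ (f : H) (x : X), E f x = (inner ℂ (k x) f : ℂ))
    (A : Subalgebra ℂ (X → ℂ)) (Mop : (X → ℂ) → (H →L[ℂ] H))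
    (hMop : ∀ f ∈ A, ∀ (u : H) (y : X), E (Mop f u) y = f y * E u y)
    {ι : Type*} (n : ℕ) (x : Fin n → X) (v : Fin n → lp (fun _ : ι => ℂ) 2)
    (hv : ∀ i, v i ≠ 0)
    (hsep : ∀ i j : Fin n, i ≠ j → ∃ f ∈ A, f (x i) ≠ f (x j))
    (h : H) (hh : ∀ i, E h (x i) ≠ 0) :
    let CAset : Set (H →L[ℂ] lp (fun _ : ι => H) 2) :=
      {T | ∃ G : ι → X → ℂ, (∀ j, G j ∈ A) ∧
        ∀ (u : H) (y : X) (j : ι), E ((T u) j) y = G j y * E u y}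
    let Jset : Set (H →L[ℂ] lp (fun _ : ι => H) 2) :=
      {T | ∃ G : ι → X → ℂ, (∀ j, G j ∈ A) ∧
        (∀ (u : H) (y : X) (j : ι), E ((T u) j) y = G j y * E u y) ∧
        ∀ i : Fin n, ∑' j : ι, (starRingEnd ℂ) (v i j) * G j (x i) = 0}
    let L : Submodule ℂ H :=
      (Submodule.span ℂ {w : H | ∃ f ∈ A, w = Mop f h}).topologicalClosure
    let CAh : Submodule ℂ (lp (fun _ : ι => H) 2) :=
      (Submodule.span ℂ {w | ∃ T ∈ CAset, w = T h}).topologicalClosure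
    let Jh : Submodule ℂ (lp (fun _ : ι => H) 2) :=
      (Submodule.span ℂ {w | ∃ T ∈ Jset, w = T h}).topologicalClosure
    ∀ kL : Fin n → H, (∀ i, kL i ∈ L ∧ k (x i) - kL i ∈ Lᗮ) →
      CAh ⊓ Jhᗮ = Submodule.span ℂ
        {w : lp (fun _ : ι => H) 2 | ∃ i : Fin n, ∀ j : ι, w j = v i j • kL i} := by
  intro CAset Jset L CAh Jh kL hkL
  classical
  have hEext : ∀ {u w : H}, (∀ y, E u y = E w y) → u = w := fun hyp => hE (funext hyp)
  have hEk : ∀ (u : H) (y : X), (inner ℂ (k y) u : ℂ) = E u y := fun u y => (hk u y).symm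
  -- the generating set of L
  set Dset : Set H := {w : H | ∃ f ∈ A, w = Mop f h} with hDset
  have hD : ∀ w ∈ Submodule.span ℂ Dset, ∃ f ∈ A, w = Mop f h := by
    intro w hw
    induction hw using Submodule.span_induction with
    | mem w hw => exact hw
    | zero =>
      refine ⟨0, zero_mem A, hEext fun y => ?_⟩
      rw [map_zero, hMop 0 (zero_mem A) h y]
      simp
    | add a b ha hb iha ihb =>
      obtain ⟨f, hfA, rfl⟩ := iha
      obtain ⟨g, hgA, rfl⟩ := ihb
      refine ⟨f + g, add_mem hfA hgA, hEext fun y => ?_⟩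
      rw [map_add, hMop _ (add_mem hfA hgA) h y]
      simp only [Pi.add_apply]
      rw [hMop f hfA h y, hMop g hgA h y, add_mul]
    | smul a w hw ihw =>
      obtain ⟨f, hfA, rfl⟩ := ihw
      refine ⟨a • f, SMulMemClass.smul_mem a hfA, hEext fun y => ?_⟩
      rw [map_smul, hMop _ (SMulMemClass.smul_mem a hfA) h y]
      simp only [Pi.smul_apply, smul_eq_mul]
      rw [hMop f hfA h y]
      ring
  have hLmem : ∀ f ∈ A, Mop f h ∈ L :=
    fun f hf => Submodule.le_topologicalClosure _ (Submodule.subset_span ⟨f, hf, rfl⟩)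
  have hkLo : ∀ (m : Fin n) (w : H), w ∈ L → (inner ℂ (k (x m)) w : ℂ) = inner ℂ (kL m) w := by
    intro m w hw
    have h0 : (inner ℂ (k (x m) - kL m) w : ℂ) = 0 :=
      (Submodule.mem_orthogonal' _ _).1 (hkL m).2 w hw
    rw [inner_sub_left, sub_eq_zero] at h0
    exact h0
  have hcol : ∀ (T : H →L[ℂ] lp (fun _ : ι => H) 2) (G : ι → X → ℂ), (∀ j, G j ∈ A) →
      (∀ (u : H) (y : X) (j : ι), E ((T u) j) y = G j y * E u y) →
      ∀ j, (T h) j = Mop (G j) h :=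
    fun T G hGA hG j => hEext fun y => by rw [hG h y j, hMop _ (hGA j) h y]
  -- Lagrange interpolation functions
  have hLag : ∀ i : Fin n, ∃ p ∈ A, ∀ m, p (x m) = if m = i then 1 else 0 := by
    intro i
    have hq : ∀ j : Fin n, ∃ q ∈ A, q (x i) = 1 ∧ (j ≠ i → q (x j) = 0) := by
      intro j
      by_cases hij : j = i
      · exact ⟨1, one_mem A, rfl, fun hc => absurd hij hc⟩
      · obtain ⟨f, hfA, hf⟩ := hsep i j (Ne.symm hij)
        refine ⟨(f (x i) - f (x j))⁻¹ • (f - algebraMap ℂ (X → ℂ) (f (x j))), ?_, ?_, ?_⟩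
        · exact SMulMemClass.smul_mem _ (sub_mem hfA (Subalgebra.algebraMap_mem A _))
        · simp only [Pi.smul_apply, Pi.sub_apply, smul_eq_mul, Pi.algebraMap_apply,
            Algebra.algebraMap_self_apply]
          rw [inv_mul_cancel₀ (sub_ne_zero.mpr hf)]
        · intro _
          simp only [Pi.smul_apply, Pi.sub_apply, smul_eq_mul, Pi.algebraMap_apply,
            Algebra.algebraMap_self_apply]
          rw [sub_self, mul_zero]
    choose q hqA hq1 hq0 using hq
    refine ⟨∏ j, q j, prod_mem fun j _ => hqA j, ?_⟩
    intro m
    by_cases hmi : m = i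
    · subst hmi
      rw [if_pos rfl, Finset.prod_apply]
      exact Finset.prod_eq_one fun j _ => hq1 j
    · rw [if_neg hmi, Finset.prod_apply]
      exact Finset.prod_eq_zero (Finset.mem_univ m) (hq0 m hmi)
  -- exact-value approximation of kL i by multiplier images of h
  have approx : ∀ (i : Fin n) (ε : ℝ), 0 < ε → ∃ f ∈ A, ‖Mop f h - kL i‖ < ε ∧
      ∀ m, f (x m) * E h (x m) = (inner ℂ (k (x m)) (kL i) : ℂ) := by
    intro i ε hε
    choose p hpA hpval using hLag
    set C : ℝ := ∑ m, ‖k (x m)‖ / ‖E h (x m)‖ * ‖Mop (p m) h‖ with hC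
    have hC0 : 0 ≤ C := Finset.sum_nonneg fun m _ => by positivity
    have hδ : 0 < ε / (1 + C) := by positivity
    have hKL : kL i ∈ closure ((Submodule.span ℂ Dset : Submodule ℂ H) : Set H) := (hkL i).1
    obtain ⟨w, hwD, hwlt⟩ := Metric.mem_closure_iff.1 hKL _ hδ
    obtain ⟨g, hgA, rfl⟩ := hD w hwD
    rw [dist_eq_norm, norm_sub_rev] at hwlt
    set d : Fin n → ℂ := fun m =>
      ((inner ℂ (k (x m)) (kL i) : ℂ) - inner ℂ (k (x m)) (Mop g h)) / E h (x m) with hd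
    set f : X → ℂ := g + ∑ m, d m • p m with hf
    have hfA : f ∈ A := add_mem hgA (sum_mem fun m _ => SMulMemClass.smul_mem _ (hpA m))
    have hfval : ∀ m, f (x m) = g (x m) + d m := by
      intro m
      simp only [hf, Pi.add_apply, Finset.sum_apply, Pi.smul_apply, smul_eq_mul]
      congr 1
      rw [Finset.sum_eq_single m (fun b _ hb => by rw [hpval b m, if_neg (Ne.symm hb), mul_zero])
        (fun hm => absurd (Finset.mem_univ m) hm), hpval m m, if_pos rfl, mul_one]
    have hMopf : Mop f h = Mop g h + ∑ m, d m • Mop (p m) h := by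
      apply hEext
      intro y
      have hR : E (Mop g h + ∑ m, d m • Mop (p m) h) y
          = g y * E h y + ∑ m, d m * (p m y * E h y) := by
        rw [map_add, map_sum]
        simp only [Pi.add_apply, Finset.sum_apply, map_smul, Pi.smul_apply, smul_eq_mul]
        rw [hMop g hgA h y]
        congr 1
        exact Finset.sum_congr rfl fun m _ => by rw [hMop (p m) (hpA m) h y]
      rw [hMop f hfA h y, hR, hf]
      simp only [Pi.add_apply, Finset.sum_apply, Pi.smul_apply, smul_eq_mul]
      rw [add_mul, Finset.sum_mul]
      congr 1
      exact Finset.sum_congr rfl fun m _ => by ring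
    have hdm : ∀ m, ‖d m‖ ≤ ‖k (x m)‖ / ‖E h (x m)‖ * ‖Mop g h - kL i‖ := by
      intro m
      rw [hd]
      simp only
      rw [norm_div]
      have hsub : (inner ℂ (k (x m)) (kL i) : ℂ) - inner ℂ (k (x m)) (Mop g h)
          = inner ℂ (k (x m)) (kL i - Mop g h) := (inner_sub_right _ _ _).symm
      rw [hsub]
      have hb := norm_inner_le_norm (𝕜 := ℂ) (k (x m)) (kL i - Mop g h)
      rw [norm_sub_rev (kL i)] at hb
      calc ‖(inner ℂ (k (x m)) (kL i - Mop g h) : ℂ)‖ / ‖E h (x m)‖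
          ≤ (‖k (x m)‖ * ‖Mop g h - kL i‖) / ‖E h (x m)‖ := by gcongr
        _ = ‖k (x m)‖ / ‖E h (x m)‖ * ‖Mop g h - kL i‖ := by ring
    refine ⟨f, hfA, ?_, ?_⟩
    · rw [hMopf]
      have hre : Mop g h + ∑ m, d m • Mop (p m) h - kL i
          = (Mop g h - kL i) + ∑ m, d m • Mop (p m) h := by abel
      have hnorm : ‖Mop g h + ∑ m, d m • Mop (p m) h - kL i‖
          ≤ ‖Mop g h - kL i‖ + ∑ m, ‖d m‖ * ‖Mop (p m) h‖ := by
        rw [hre]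
        refine (norm_add_le _ _).trans ?_
        gcongr
        refine (norm_sum_le _ _).trans ?_
        exact Finset.sum_le_sum fun m _ => le_of_eq (norm_smul _ _)
      have hbound : ‖Mop g h - kL i‖ + ∑ m, ‖d m‖ * ‖Mop (p m) h‖
          ≤ ‖Mop g h - kL i‖ * (1 + C) := by
        rw [mul_add, mul_one, hC, Finset.mul_sum]
        refine add_le_add_right (Finset.sum_le_sum fun m _ => ?_) _
        calc ‖d m‖ * ‖Mop (p m) h‖
            ≤ (‖k (x m)‖ / ‖E h (x m)‖ * ‖Mop g h - kL i‖) * ‖Mop (p m) h‖ := by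
              gcongr
              exact hdm m
          _ = ‖Mop g h - kL i‖ * (‖k (x m)‖ / ‖E h (x m)‖ * ‖Mop (p m) h‖) := by ring
      have hfin : ‖Mop g h - kL i‖ * (1 + C) < ε / (1 + C) * (1 + C) :=
        mul_lt_mul_of_pos_right hwlt (by linarith)
      rw [div_mul_cancel₀ _ (by linarith : (1:ℝ) + C ≠ 0)] at hfin
      linarith
    · intro m
      have hgv : (inner ℂ (k (x m)) (Mop g h) : ℂ) = g (x m) * E h (x m) := by
        rw [hEk, hMop g hgA h (x m)]
      rw [hfval m, hd]
      simp only
      rw [add_mul, div_mul_cancel₀ _ (hh m), hgv]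
      ring
  -- span vectors
  set wvec : Fin n → lp (fun _ : ι => H) 2 := fun i => stmt11Tens (v i) (kL i) with hwvec
  set Wsub : Submodule ℂ (lp (fun _ : ι => H) 2) := Submodule.span ℂ (Set.range wvec) with hWsub
  haveI : FiniteDimensional ℂ Wsub := FiniteDimensional.span_of_finite ℂ (Set.finite_range wvec)
  haveI : CompleteSpace Wsub := FiniteDimensional.complete ℂ Wsub
  have hThL : ∀ (T : H →L[ℂ] lp (fun _ : ι => H) 2) (G : ι → X → ℂ), (∀ j, G j ∈ A) →
      (∀ (u : H) (y : X) (j : ι), E ((T u) j) y = G j y * E u y) → ∀ j, (T h) j ∈ L := by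
    intro T G hGA hG j
    rw [hcol T G hGA hG j]
    exact hLmem _ (hGA j)
  have hWCA : ∀ i, wvec i ∈ CAh := by
    intro i
    have hclosed : IsClosed ((CAh.comap ((stmt11TensCLM (v i) : H →L[ℂ] lp (fun _ : ι => H) 2) :
        H →ₗ[ℂ] lp (fun _ : ι => H) 2)) : Set H) :=
      (Submodule.isClosed_topologicalClosure _).preimage (stmt11TensCLM (v i)).continuous
    have hle : L ≤ CAh.comap ((stmt11TensCLM (v i) : H →L[ℂ] lp (fun _ : ι => H) 2) :
        H →ₗ[ℂ] lp (fun _ : ι => H) 2) := by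
      refine Submodule.topologicalClosure_minimal _ ?_ hclosed
      rw [Submodule.span_le]
      rintro w ⟨fm, hfm, rfl⟩
      rw [SetLike.mem_coe, Submodule.mem_comap]
      have hT : (stmt11TensCLM (v i)).comp (Mop fm) ∈ CAset := by
        refine ⟨fun j => (v i j : ℂ) • fm, fun j => SMulMemClass.smul_mem _ hfm, ?_⟩
        intro u y j
        have h1 : ((((stmt11TensCLM (v i)).comp (Mop fm)) u) : ∀ _ : ι, H) j
            = v i j • Mop fm u := rfl
        rw [h1, map_smul, Pi.smul_apply, smul_eq_mul, hMop fm hfm u y]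
        simp only [Pi.smul_apply, smul_eq_mul]
        ring
      have h2 : (stmt11TensCLM (v i)) (Mop fm h) = ((stmt11TensCLM (v i)).comp (Mop fm)) h := rfl
      rw [ContinuousLinearMap.coe_coe, h2]
      exact Submodule.le_topologicalClosure _ (Submodule.subset_span ⟨_, hT, rfl⟩)
    have := hle (hkL i).1
    rw [Submodule.mem_comap, ContinuousLinearMap.coe_coe, stmt11TensCLM_apply] at this
    exact this
  have hJperp : ∀ T ∈ Jset, ∀ i, (inner ℂ (wvec i) (T h) : ℂ) = 0 := by
    rintro T ⟨G, hGA, hGmul, hG0⟩ i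
    have hL2 : ∀ j, (inner ℂ (kL i) ((T h) j) : ℂ) = G j (x i) * E h (x i) := by
      intro j
      rw [← hkLo i _ (hThL T G hGA hGmul j), hEk, hGmul h (x i) j]
    simp only [hwvec]
    rw [stmt11_inner_tens_left]
    calc ∑' j, (starRingEnd ℂ) (v i j) * (inner ℂ (kL i) ((T h) j) : ℂ)
        = ∑' j, ((starRingEnd ℂ) (v i j) * G j (x i)) * E h (x i) := by
          congr 1
          funext j
          rw [hL2 j]
          ring
      _ = (∑' j, (starRingEnd ℂ) (v i j) * G j (x i)) * E h (x i) := tsum_mul_right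
      _ = 0 := by rw [hG0 i, zero_mul]
  have hWJo : ∀ i, wvec i ∈ Jhᗮ := by
    intro i
    have hle : Jh ≤ (ℂ ∙ wvec i)ᗮ := by
      apply Submodule.topologicalClosure_minimal
      · rw [Submodule.span_le]
        rintro w ⟨T, hT, rfl⟩
        rw [SetLike.mem_coe, Submodule.mem_orthogonal]
        intro z hz
        obtain ⟨a, rfl⟩ := Submodule.mem_span_singleton.1 hz
        rw [inner_smul_left, hJperp T hT i, mul_zero]
      · exact Submodule.isClosed_orthogonal _
    rw [Submodule.mem_orthogonal]
    intro u hu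
    have h0 : (inner ℂ (wvec i) u : ℂ) = 0 :=
      (Submodule.mem_orthogonal _ _).1 (hle hu) (wvec i) (Submodule.mem_span_singleton_self _)
    rw [← inner_conj_symm, h0, map_zero]
  have hWsubJo : Wsub ≤ Jhᗮ := by
    rw [hWsub, Submodule.span_le]
    rintro w ⟨i, rfl⟩
    exact hWJo i
  -- the core approximation argument
  have hCore : ∀ T ∈ CAset,
      T h - (Wsub.orthogonalProjectionOnto (T h) : lp (fun _ : ι => H) 2) ∈ Jh := by
    rintro T ⟨G, hGA, hGmul⟩
    set ξ : lp (fun _ : ι => H) 2 := T h with hξ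
    set s : lp (fun _ : ι => H) 2 := (Wsub.orthogonalProjectionOnto ξ : lp (fun _ : ι => H) 2) with hs
    have hsW : s ∈ Wsub := SetLike.coe_mem _
    obtain ⟨c, hc⟩ := (Submodule.mem_span_range_iff_exists_fun ℂ).1 (by rwa [hWsub] at hsW)
    have horth : ∀ m, (inner ℂ (wvec m) (ξ - s) : ℂ) = 0 := by
      intro m
      have hso := Submodule.sub_starProjection_mem_orthogonal (K := Wsub) ξ
      exact (Submodule.mem_orthogonal _ _).1 hso (wvec m) (Submodule.subset_span ⟨m, rfl⟩)
    have hclosed : IsClosed (Jh : Set (lp (fun _ : ι => H) 2)) :=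
      Submodule.isClosed_topologicalClosure _
    have hmemcl : ξ - s ∈ closure (Jh : Set (lp (fun _ : ι => H) 2)) := by
      rw [Metric.mem_closure_iff]
      intro ε hε
      set q : ℝ := ε / (2 * (n + 1)) with hq
      have hq0 : 0 < q := by positivity
      have hδ : ∀ i : Fin n, 0 < q / (‖c i‖ * ‖v i‖ + 1) := fun i => by positivity
      choose f hfA hfn hfv using fun i : Fin n => approx i _ (hδ i)
      set R : H →L[ℂ] lp (fun _ : ι => H) 2 :=
        T - ∑ i, c i • ((stmt11TensCLM (v i)).comp (Mop (f i))) with hR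
      have hRu : ∀ (u : H) (j : ι), (R u) j = (T u) j - ∑ i, c i • (v i j • Mop (f i) u) := by
        intro u j
        rw [hR]
        simp only [ContinuousLinearMap.sub_apply, ContinuousLinearMap.sum_apply,
          ContinuousLinearMap.smul_apply, ContinuousLinearMap.comp_apply, stmt11TensCLM_apply,
          lp.coeFn_sub, Pi.sub_apply]
        congr 1
        rw [lp.coeFn_sum, Finset.sum_apply]
        exact Finset.sum_congr rfl fun i _ => by
          rw [lp.coeFn_smul, Pi.smul_apply, stmt11Tens_apply]
      have hRE : ∀ (u : H) (y : X) (j : ι), E ((R u) j) y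
          = (G j y - ∑ i, c i * (v i j * f i y)) * E u y := by
        intro u y j
        rw [hRu u j, map_sub]
        simp only [Pi.sub_apply]
        rw [map_sum]
        simp only [Finset.sum_apply, map_smul, Pi.smul_apply, smul_eq_mul]
        rw [hGmul u y j]
        rw [Finset.sum_congr rfl fun i (_ : i ∈ Finset.univ) => by
          rw [hMop _ (hfA i) u y]]
        rw [sub_mul, Finset.sum_mul]
        congr 1
        exact Finset.sum_congr rfl fun i _ => by ring
      have hRh : R h = ξ - ∑ i, c i • stmt11Tens (v i) (Mop (f i) h) := by
        rw [hR]
        simp only [ContinuousLinearMap.sub_apply, ContinuousLinearMap.sum_apply,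
          ContinuousLinearMap.smul_apply, ContinuousLinearMap.comp_apply, stmt11TensCLM_apply, hξ]
      have hRmem : R ∈ Jset := by
        refine ⟨fun j => G j - ∑ i, c i • ((v i j : ℂ) • f i), ?_, ?_, ?_⟩
        · intro j
          exact sub_mem (hGA j)
            (sum_mem fun i _ => SMulMemClass.smul_mem _ (SMulMemClass.smul_mem _ (hfA i)))
        · intro u y j
          rw [hRE u y j]
          congr 1
          simp only [Pi.sub_apply, Finset.sum_apply, Pi.smul_apply, smul_eq_mul]
        · intro m
          have hinner : (inner ℂ (stmt11Tens (v m) (k (x m))) (R h) : ℂ) = 0 := by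
            rw [hRh, inner_sub_right, inner_sum]
            have e1 : (inner ℂ (stmt11Tens (v m) (k (x m))) ξ : ℂ) = inner ℂ (wvec m) ξ := by
              have hz : (inner ℂ (stmt11Tens (v m) (k (x m) - kL m)) ξ : ℂ) = 0 := by
                rw [stmt11_inner_tens_left]
                have hzz : ∀ j, (inner ℂ (k (x m) - kL m) (ξ j) : ℂ) = 0 := fun j =>
                  (Submodule.mem_orthogonal' _ _).1 (hkL m).2 _ (hThL T G hGA hGmul j)
                simp [hzz]
              rw [stmt11Tens_sub, inner_sub_left] at hz
              have h3 := sub_eq_zero.1 hz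
              simpa [hwvec] using h3
            have e2 : ∀ i,
                (inner ℂ (stmt11Tens (v m) (k (x m))) (stmt11Tens (v i) (Mop (f i) h)) : ℂ)
                = inner ℂ (wvec m) (wvec i) := by
              intro i
              rw [stmt11_inner_tens_tens]
              have h4 : (inner ℂ (k (x m)) (Mop (f i) h) : ℂ) = inner ℂ (kL m) (kL i) := by
                rw [hEk, hMop _ (hfA i) h (x m), hfv i m, hkLo m _ ((hkL i).1)]
              rw [h4]
              simp only [hwvec]
              rw [stmt11_inner_tens_tens]
            rw [e1]
            rw [Finset.sum_congr rfl fun i (_ : i ∈ Finset.univ) => by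
              rw [inner_smul_right, e2 i]]
            have h5 : (inner ℂ (wvec m) ξ : ℂ) - ∑ i, c i * inner ℂ (wvec m) (wvec i)
                = inner ℂ (wvec m) (ξ - s) := by
              rw [inner_sub_right, ← hc, inner_sum]
              congr 1
              exact Finset.sum_congr rfl fun i _ => (inner_smul_right _ _ _).symm
            rw [h5, horth m]
          have hterm : ∀ j, (inner ℂ ((stmt11Tens (v m) (k (x m))) j) ((R h) j) : ℂ)
              = ((starRingEnd ℂ) (v m j)
                  * ((G j - ∑ i, c i • ((v i j : ℂ) • f i)) (x m))) * E h (x m) := by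
            intro j
            rw [stmt11Tens_apply, inner_smul_left, hEk ((R h) j) (x m), hRE h (x m) j]
            simp only [Pi.sub_apply, Finset.sum_apply, Pi.smul_apply, smul_eq_mul]
            ring
          have hsum : (∑' j, (starRingEnd ℂ) (v m j)
              * ((G j - ∑ i, c i • ((v i j : ℂ) • f i)) (x m))) * E h (x m) = 0 := by
            rw [← tsum_mul_right]
            calc ∑' j, (starRingEnd ℂ) (v m j)
                  * ((G j - ∑ i, c i • ((v i j : ℂ) • f i)) (x m)) * E h (x m)
                = ∑' j, (inner ℂ ((stmt11Tens (v m) (k (x m))) j) ((R h) j) : ℂ) := by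
                  congr 1
                  funext j
                  rw [hterm j]
              _ = inner ℂ (stmt11Tens (v m) (k (x m))) (R h) := (lp.inner_eq_tsum _ _).symm
              _ = 0 := hinner
          exact (mul_eq_zero.1 hsum).resolve_right (hh m)
      refine ⟨R h, Submodule.le_topologicalClosure _ (Submodule.subset_span ⟨R, hRmem, rfl⟩), ?_⟩
      rw [dist_eq_norm]
      have hdiff : (ξ - s) - R h = ∑ i, c i • stmt11Tens (v i) (Mop (f i) h - kL i) := by
        rw [hRh, ← hc]
        simp only [stmt11Tens_sub, smul_sub, hwvec]
        rw [Finset.sum_sub_distrib]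
        abel
      rw [hdiff]
      have hb1 : ‖∑ i, c i • stmt11Tens (v i) (Mop (f i) h - kL i)‖ ≤ ∑ _i : Fin n, q := by
        refine (norm_sum_le _ _).trans (Finset.sum_le_sum fun i _ => ?_)
        rw [norm_smul, stmt11Tens_norm]
        have hlt := hfn i
        have hpos : (0:ℝ) < ‖c i‖ * ‖v i‖ + 1 := by positivity
        calc ‖c i‖ * (‖v i‖ * ‖Mop (f i) h - kL i‖)
            ≤ (‖c i‖ * ‖v i‖ + 1) * ‖Mop (f i) h - kL i‖ := by
              nlinarith [norm_nonneg (c i), norm_nonneg (v i), norm_nonneg (Mop (f i) h - kL i)]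
          _ ≤ (‖c i‖ * ‖v i‖ + 1) * (q / (‖c i‖ * ‖v i‖ + 1)) :=
              mul_le_mul_of_nonneg_left (le_of_lt hlt) (le_of_lt hpos)
          _ = q := by field_simp
      have hb2 : (∑ _i : Fin n, q) = n * q := by
        rw [Finset.sum_const, Finset.card_univ, Fintype.card_fin, nsmul_eq_mul]
      have hnq : (n : ℝ) * q < ε := by
        have h1 : (n:ℝ) * q < (2*((n:ℝ)+1)) * q := by
          have h2 : (n:ℝ) < 2*((n:ℝ)+1) := by
            have : (0:ℝ) ≤ (n:ℝ) := Nat.cast_nonneg n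
            linarith
          exact mul_lt_mul_of_pos_right h2 hq0
        have h3 : (2*((n:ℝ)+1)) * q = ε := by
          rw [hq]
          field_simp
        linarith
      exact lt_of_le_of_lt (hb1.trans (le_of_eq hb2)) hnq
    rwa [hclosed.closure_eq] at hmemcl
  -- conclusion
  have hset : {w : lp (fun _ : ι => H) 2 | ∃ i : Fin n, ∀ j : ι, w j = v i j • kL i}
      = Set.range wvec := by
    ext w
    constructor
    · rintro ⟨i, hw⟩
      exact ⟨i, lp.ext (funext fun j => (hw j).symm)⟩
    · rintro ⟨i, rfl⟩
      exact ⟨i, fun j => rfl⟩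
  rw [hset, ← hWsub]
  apply le_antisymm
  · intro z hz
    obtain ⟨hz1, hz2⟩ := Submodule.mem_inf.1 hz
    have hQ : z - (Wsub.orthogonalProjectionOnto z : lp (fun _ : ι => H) 2) ∈ Jh := by
      set Q : lp (fun _ : ι => H) 2 →L[ℂ] lp (fun _ : ι => H) 2 :=
        ContinuousLinearMap.id ℂ _ - (Wsub.subtypeL.comp (Wsub.orthogonalProjectionOnto)) with hQdef
      have hQapp : ∀ z', Q z' = z' - (Wsub.orthogonalProjectionOnto z' : lp (fun _ : ι => H) 2) := by
        intro z'
        simp [hQdef, ContinuousLinearMap.sub_apply, ContinuousLinearMap.comp_apply,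
          Submodule.subtypeL_apply]
      have hle : CAh ≤ Jh.comap (Q : lp (fun _ : ι => H) 2 →ₗ[ℂ] lp (fun _ : ι => H) 2) := by
        apply Submodule.topologicalClosure_minimal
        · rw [Submodule.span_le]
          rintro w ⟨T, hT, rfl⟩
          rw [SetLike.mem_coe, Submodule.mem_comap, ContinuousLinearMap.coe_coe, hQapp]
          exact hCore T hT
        · exact (Submodule.isClosed_topologicalClosure _).preimage Q.continuous
      have hz3 := hle hz1
      rw [Submodule.mem_comap, ContinuousLinearMap.coe_coe, hQapp] at hz3
      exact hz3
    have hPzW : (Wsub.orthogonalProjectionOnto z : lp (fun _ : ι => H) 2) ∈ Wsub := SetLike.coe_mem _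
    have hQJo : z - (Wsub.orthogonalProjectionOnto z : lp (fun _ : ι => H) 2) ∈ Jhᗮ :=
      sub_mem hz2 (hWsubJo hPzW)
    have hzero : z - (Wsub.orthogonalProjectionOnto z : lp (fun _ : ι => H) 2) = 0 :=
      Submodule.disjoint_def.1 Jh.orthogonal_disjoint _ hQ hQJo
    have hzeq : z = (Wsub.orthogonalProjectionOnto z : lp (fun _ : ι => H) 2) := by
      rwa [sub_eq_zero] at hzero
    rw [hzeq]
    exact hPzW
  · rw [hWsub, Submodule.span_le]
    rintro w ⟨i, rfl⟩
    rw [SetLike.mem_coe, Submodule.mem_inf]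
    exact ⟨hWCA i, hWJo i⟩
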